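/- Every isomorphism in the category of Markov kernels between Polish measurable spaces is deterministic: if M : X → Y and N : Y → X are Markov kernels with M·N = id_X and N·M = id_Y (as kernels, where identity kernels are x ↦ δ_x), then for every x ∈ X there exists y ∈ Y with M(x) = δ_y. -/

import Mathlib

open ProbabilityTheory MeasureTheory

/-- A probability measure giving full mass to a singleton is the Dirac measure there. -/
lemma eq_dirac_of_singleton_full {X : Type*} [MeasurableSpace X]
    (ν : Measure X) [IsProbabilityMeasure ν] {x : X} (hx : MeasurableSet ({x} : Set X))
    (h : ν {x} = 1) : ν = Measure.dirac x := by
  ext s hs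
  by_cases hxs : x ∈ s
  · have h1 : ν s ≥ ν {x} := measure_mono (Set.singleton_subset_iff.mpr hxs)
    have h2 : ν s ≤ 1 := prob_le_one
    rw [Measure.dirac_apply_of_mem hxs]
    exact le_antisymm h2 (h ▸ h1)
  · have hc : ν {x}ᶜ = 0 := by
      have := measure_compl hx (measure_ne_top ν _)
      simp [h, measure_univ] at this
      exact this
    have h1 : ν s ≤ ν {x}ᶜ :=
      measure_mono (fun z hz => by rintro rfl; exact hxs hz)
    rw [Measure.dirac_apply' _ hs, Set.indicator_of_notMem hxs]
    exact le_antisymm (hc ▸ h1) zero_le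

/-- All isomorphisms in the category of Markov kernels between Polish (standard Borel)
measurable spaces are deterministic: if `M : X → Y` and `N : Y → X` are mutually inverse
Markov kernels, then every `M x` is a Dirac measure. -/
theorem markov_iso_deterministic
    {X Y : Type*} [MeasurableSpace X] [MeasurableSpace Y]
    [StandardBorelSpace X] [StandardBorelSpace Y]
    (M : Kernel X Y) (N : Kernel Y X) [IsMarkovKernel M] [IsMarkovKernel N]
    (hMN : N ∘ₖ M = Kernel.id) (hNM : M ∘ₖ N = Kernel.id) :
    ∀ x : X, ∃ y : Y, M x = Measure.dirac y := by
  intro x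
  set μ := M x with hμ
  have hxm : MeasurableSet ({x} : Set X) := measurableSet_singleton x
  -- f y = N y {x}
  set f : Y → ENNReal := fun y => N y {x} with hf
  have hfm : Measurable f := Kernel.measurable_coe N hxm
  have hint : ∫⁻ y, f y ∂μ = 1 := by
    have := congrArg (fun κ : Kernel X X => κ x {x}) hMN
    simp only [Kernel.comp_apply' N M x hxm] at this
    simpa [Kernel.id, Kernel.deterministic_apply, Measure.dirac_apply_of_mem,
      Set.mem_singleton_iff] using this
  -- ∫ (1 - f) = 0
  have hle : ∀ y, f y ≤ 1 := fun y => prob_le_one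
  have hsub : ∫⁻ y, (1 : ENNReal) - f y ∂μ = 0 := by
    rw [lintegral_sub hfm (by simp [hint]) (ae_of_all _ hle)]
    simp [hint]
  have hae : ∀ᵐ y ∂μ, (1 : ENNReal) - f y = 0 := by
    exact (lintegral_eq_zero_iff (measurable_const.sub hfm)).mp hsub
  have hae1 : ∀ᵐ y ∂μ, f y = 1 := by
    filter_upwards [hae] with y hy
    exact le_antisymm (hle y) (tsub_eq_zero_iff_le.mp hy)
  have hne : (ae μ).NeBot := ae_neBot.mpr (IsProbabilityMeasure.ne_zero μ)
  obtain ⟨y, hy⟩ := hae1.exists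
  have hNy : N y = Measure.dirac x := eq_dirac_of_singleton_full (N y) hxm hy
  refine ⟨y, ?_⟩
  have h1 : (M ∘ₖ N) y = Measure.dirac y := by
    rw [hNM]
    simp [Kernel.id, Kernel.deterministic_apply]
  have h2 : (M ∘ₖ N) y = M x := by
    rw [Kernel.comp_apply, hNy, Measure.dirac_bind (Kernel.measurable M)]
  rw [hμ, ← h2, h1]
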